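/- For multiplicative characters A, B, B', C of F_q and x ∈ F_q, F₁(A;B,B';C;x,1) = B'(-1)·₂F₁[B, A; B̄'C; x]. -/
import Mathlib


open Finset

variable {F : Type*} [Field F] [Fintype F] [DecidableEq F]

/-- Finite-field binomial coefficient `[A choose B] = B(-1) * J(A, B⁻¹)`. -/
noncomputable def ffBinom (A B : MulChar F ℂ) : ℂ :=
  B (-1) * jacobiSum A B⁻¹

/-- Finite-field Gauss hypergeometric function
`₂F₁[A,B;C;x] = ε(x)·(BC)(-1)·∑_u B(u)(B̅C)(1-u)A̅(1-ux)`. -/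
noncomputable def ffHyp (A B C : MulChar F ℂ) (x : F) : ℂ :=
  (1 : MulChar F ℂ) x * (B * C) (-1) *
    ∑ u : F, B u * (B⁻¹ * C) (1 - u) * A⁻¹ (1 - u * x)

/-- Finite-field Appell function
`F₁(A;B,B';C;x,y) = ε(xy)·(AC)(-1)·∑_u A(u)(A̅C)(1-u)B̅(1-ux)B̅'(1-uy)`. -/
noncomputable def ffAppellF1 (A B B' C : MulChar F ℂ) (x y : F) : ℂ :=
  (1 : MulChar F ℂ) (x * y) * (A * C) (-1) *
    ∑ u : F, A u * (A⁻¹ * C) (1 - u) * B⁻¹ (1 - u * x) * B'⁻¹ (1 - u * y)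

/-- δ(0)=1, δ(t)=0 otherwise. -/
noncomputable def ffDelta (x : F) : ℂ := if x = 0 then 1 else 0

theorem stmt5 (A B B' C : MulChar F ℂ) (x : F) :
    ffAppellF1 A B B' C x 1 = B' (-1) * ffHyp B A (B'⁻¹ * C) x := by
  unfold ffAppellF1 ffHyp
  have h1 : B' (-1) * B'⁻¹ (-1) = 1 := by
    rw [← MulChar.mul_apply, mul_inv_cancel, MulChar.one_apply (isUnit_one.neg)]
  simp only [mul_one, MulChar.mul_apply]
  rw [show (∑ u : F, A u * (A⁻¹ (1 - u) * C (1 - u)) * B⁻¹ (1 - u * x) * B'⁻¹ (1 - u))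
      = ∑ u : F, A u * (A⁻¹ (1 - u) * (B'⁻¹ (1 - u) * C (1 - u))) * B⁻¹ (1 - u * x) from
    Finset.sum_congr rfl fun u _ => by ring]
  linear_combination (-((1 : MulChar F ℂ) x * A (-1) * C (-1) *
    ∑ u : F, A u * (A⁻¹ (1 - u) * (B'⁻¹ (1 - u) * C (1 - u))) * B⁻¹ (1 - u * x))) * h1
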